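/- If A, B, C are positive integers with A!·B! = C! and A ≤ B ≤ C - 2, then R(A,B) ≤ 0, where R(A,B) = log Γ(A+B+2 - log(A+1)/log 2 - log(B+1)/log 2) - log Γ(A+1) - log Γ(B+1). -/

import Mathlib

lemma two_pow_digitSum_le (n : ℕ) : 2 ^ ((Nat.digits 2 n).sum) ≤ n + 1 := by
  induction n using Nat.strong_induction_on with
  | _ n ih =>
    rcases Nat.eq_zero_or_pos n with h0 | h0
    · simp [h0]
    · rw [Nat.digits_def' (by norm_num : 1 < 2) h0, List.sum_cons, pow_add]
      have hq := ih (n / 2) (Nat.div_lt_self h0 one_lt_two)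
      have hmul : 2 ^ (n % 2) * 2 ^ ((Nat.digits 2 (n / 2)).sum)
          ≤ 2 ^ (n % 2) * (n / 2 + 1) := Nat.mul_le_mul_left _ hq
      have hdm := Nat.div_add_mod n 2
      have hm : n % 2 = 0 ∨ n % 2 = 1 := by omega
      rcases hm with hm | hm <;> rw [hm] at hmul ⊢ <;> simp at hmul ⊢ <;> omega

lemma digitSum_pos (n : ℕ) (hn : 0 < n) : 0 < (Nat.digits 2 n).sum := by
  induction n using Nat.strong_induction_on with
  | _ n ih =>
    rw [Nat.digits_def' (by norm_num : 1 < 2) hn, List.sum_cons]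
    have hm : n % 2 = 0 ∨ n % 2 = 1 := by omega
    rcases hm with hm | hm
    · have h2 : 0 < n / 2 := by omega
      have := ih (n / 2) (Nat.div_lt_self hn one_lt_two) h2
      omega
    · omega

theorem R_nonpos (A B C : ℕ) (hA : 0 < A) (hAB : A ≤ B) (hBC : B ≤ C - 2) (hC : 2 ≤ C)
    (h : Nat.factorial A * Nat.factorial B = Nat.factorial C) :
    Real.log (Real.Gamma ((A : ℝ) + B + 2 - Real.log (A + 1) / Real.log 2
        - Real.log (B + 1) / Real.log 2))
      - Real.log (Real.Gamma ((A : ℝ) + 1)) - Real.log (Real.Gamma ((B : ℝ) + 1)) ≤ 0 := by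
  have hlog2 : (0:ℝ) < Real.log 2 := Real.log_pos (by norm_num)
  set sA := (Nat.digits 2 A).sum with hsA
  set sB := (Nat.digits 2 B).sum with hsB
  set sC := (Nat.digits 2 C).sum with hsC
  -- Legendre / 2-adic valuation identity
  have hval : A + B + sC = C + sA + sB := by
    haveI : Fact (Nat.Prime 2) := ⟨Nat.prime_two⟩
    have hv : padicValNat 2 (Nat.factorial A) + padicValNat 2 (Nat.factorial B)
        = padicValNat 2 (Nat.factorial C) := by
      rw [← padicValNat.mul (Nat.factorial_ne_zero A) (Nat.factorial_ne_zero B), h]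
    have lA := sub_one_mul_padicValNat_factorial (p := 2) A
    have lB := sub_one_mul_padicValNat_factorial (p := 2) B
    have lC := sub_one_mul_padicValNat_factorial (p := 2) C
    simp only [show (2:ℕ) - 1 = 1 from rfl, one_mul] at lA lB lC
    have dA := Nat.digit_sum_le 2 A
    have dB := Nat.digit_sum_le 2 B
    have dC := Nat.digit_sum_le 2 C
    omega
  have hsCpos : 0 < sC := digitSum_pos C (by omega)
  -- bounds on the logs
  have logge : ∀ n : ℕ, ((Nat.digits 2 n).sum : ℝ) ≤ Real.log (n + 1) / Real.log 2 := by
    intro n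
    rw [le_div_iff₀ hlog2]
    have h2 : ((2:ℕ) ^ ((Nat.digits 2 n).sum) : ℝ) ≤ ((n:ℝ) + 1) := by
      exact_mod_cast two_pow_digitSum_le n
    calc ((Nat.digits 2 n).sum : ℝ) * Real.log 2
        = Real.log ((2:ℝ) ^ ((Nat.digits 2 n).sum)) := (Real.log_pow _ _).symm
      _ ≤ Real.log ((n:ℝ) + 1) := Real.log_le_log (by positivity) (by push_cast at h2 ⊢; linarith)
  have logle : ∀ n : ℕ, Real.log (n + 1) / Real.log 2 ≤ (n:ℝ) := by
    intro n
    rw [div_le_iff₀ hlog2]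
    have h2 : ((n:ℝ) + 1) ≤ ((2:ℕ) ^ n : ℝ) := by exact_mod_cast Nat.lt_two_pow_self (n := n)
    calc Real.log ((n:ℝ) + 1) ≤ Real.log ((2:ℝ) ^ n) :=
          Real.log_le_log (by positivity) (by push_cast at h2 ⊢; linarith)
      _ = (n:ℝ) * Real.log 2 := Real.log_pow _ _
  set x : ℝ := (A : ℝ) + B + 2 - Real.log (A + 1) / Real.log 2 - Real.log (B + 1) / Real.log 2
    with hx
  have hx2 : (2:ℝ) ≤ x := by
    have := logle A; have := logle B; rw [hx]; push_cast; linarith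
  have hxC : x ≤ (C:ℝ) + 1 := by
    have h1 := logge A; have h2 := logge B
    have hc : (A:ℝ) + B + sC = (C:ℝ) + sA + sB := by exact_mod_cast hval
    have hsc : (1:ℝ) ≤ sC := by exact_mod_cast hsCpos
    rw [hx]; push_cast at hc ⊢; linarith
  have hmono : Real.Gamma x ≤ Real.Gamma ((C:ℝ) + 1) :=
    Real.Gamma_strictMonoOn_Ici.monotoneOn hx2 (by simp; norm_cast; omega) hxC
  have hxpos : 0 < Real.Gamma x := Real.Gamma_pos_of_pos (by linarith)
  have hGA : Real.Gamma ((A:ℝ) + 1) = (Nat.factorial A : ℝ) := Real.Gamma_nat_eq_factorial A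
  have hGB : Real.Gamma ((B:ℝ) + 1) = (Nat.factorial B : ℝ) := Real.Gamma_nat_eq_factorial B
  have hGC : Real.Gamma ((C:ℝ) + 1) = (Nat.factorial C : ℝ) := Real.Gamma_nat_eq_factorial C
  have hlogsum : Real.log (Nat.factorial A : ℝ) + Real.log (Nat.factorial B : ℝ)
      = Real.log (Nat.factorial C : ℝ) := by
    rw [← Real.log_mul (by exact_mod_cast Nat.factorial_ne_zero A)
      (by exact_mod_cast Nat.factorial_ne_zero B)]
    norm_cast
    rw [h]
  have hle : Real.log (Real.Gamma x) ≤ Real.log (Nat.factorial C : ℝ) := by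
    rw [← hGC]; exact Real.log_le_log hxpos hmono
  rw [hGA, hGB]
  linarith
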